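/- Let $\epsilon > 0$ and let $(z_n)_{n\geq 1}$ be a sequence of complex numbers with $z_1 \neq 0$, $|z_n| \leq |z_1|$ for all $n$, and $\sum_n |z_n| < \infty$. Set $s_m = \sum_{n=1}^{\infty} z_n^m$ and $M = |z_1|^{-1} \sum_n |z_n|$. Then there exists a positive integer $m_0$ with $1 \leq m_0 \leq (12+\epsilon) M$ such that $\Re(s_{m_0}) \geq \frac{\epsilon}{48+5\epsilon} |z_1|^{m_0}$. -/

import Mathlib

set_option maxHeartbeats 2000000

open Finset Metric Complex


-- Fejér identity on the unit circle
lemma fejer_identity (v : ℂ) (hv : ‖v‖ = 1) (n : ℕ) :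
    Complex.normSq (∑ j ∈ Finset.range (n+1), v^j)
      = (n+1 : ℝ) + 2 * ∑ m ∈ Finset.Icc 1 n, ((n+1 : ℝ) - m) * (v^m).re := by
  have hnsq : ∀ k : ℕ, Complex.normSq (v ^ k) = 1 := by
    intro k
    rw [map_pow, ← Complex.sq_norm, hv] <;> simp
  induction n with
  | zero => simp
  | succ n ih =>
    rw [Finset.sum_range_succ, Complex.normSq_add, ih, hnsq]
    have hconj : (∑ j ∈ Finset.range (n+1), v^j) * (starRingEnd ℂ) (v^(n+1))
        = ∑ j ∈ Finset.range (n+1), (starRingEnd ℂ) (v^(n+1-j)) := by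
      rw [Finset.sum_mul]
      refine Finset.sum_congr rfl (fun j hj => ?_)
      have hjn : j ≤ n := Nat.lt_succ_iff.mp (Finset.mem_range.mp hj)
      have hsplit : v ^ (n+1) = v ^ (n+1-j) * v ^ j := by
        rw [← pow_add]; congr 1; omega
      rw [hsplit, map_mul]
      have hone : v ^ j * (starRingEnd ℂ) (v ^ j) = 1 := by
        rw [Complex.mul_conj, hnsq j]; simp
      calc v ^ j * ((starRingEnd ℂ) (v ^ (n+1-j)) * (starRingEnd ℂ) (v ^ j))
          = (v ^ j * (starRingEnd ℂ) (v ^ j)) * (starRingEnd ℂ) (v ^ (n+1-j)) := by ring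
        _ = (starRingEnd ℂ) (v ^ (n+1-j)) := by rw [hone, one_mul]
    have hre : ((∑ j ∈ Finset.range (n+1), v^j) * (starRingEnd ℂ) (v^(n+1))).re
        = ∑ m ∈ Finset.Icc 1 (n+1), (v^m).re := by
      rw [hconj, Complex.re_sum]
      have h1 : ∑ j ∈ Finset.range (n+1), ((starRingEnd ℂ) (v^(n+1-j))).re
          = ∑ j ∈ Finset.range (n+1), (v^(n+1-j)).re := by
        refine Finset.sum_congr rfl (fun j _ => ?_); rw [Complex.conj_re]
      have h2 : ∑ j ∈ Finset.range (n+1), (v^(n+1-j)).re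
          = ∑ j ∈ Finset.range (n+1), (v^(j+1)).re := by
        have h := Finset.sum_range_reflect (fun i => (v^(i+1)).re) (n+1)
        refine Eq.trans ?_ h
        refine Finset.sum_congr rfl (fun j hj => ?_)
        have hjn : j ≤ n := Nat.lt_succ_iff.mp (Finset.mem_range.mp hj)
        congr 2
        omega
      have h3 : ∑ j ∈ Finset.range (n+1), (v^(j+1)).re
          = ∑ m ∈ Finset.Icc 1 (n+1), (v^m).re := by
        rw [← Finset.Ico_add_one_right_eq_Icc, Finset.sum_Ico_eq_sum_range]
        refine Finset.sum_congr (by norm_num) (fun j _ => ?_)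
        rw [add_comm]
      rw [h1, h2, h3]
    rw [hre]
    have key : ∑ m ∈ Finset.Icc 1 (n+1), ((((n+1):ℕ):ℝ) + 1 - m) * (v^m).re
        = (∑ m ∈ Finset.Icc 1 n, ((n:ℝ) + 1 - m) * (v^m).re)
          + ∑ m ∈ Finset.Icc 1 (n+1), (v^m).re := by
      have hcongr : ∀ m ∈ Finset.Icc 1 (n+1),
          ((((n+1):ℕ):ℝ) + 1 - m) * (v^m).re
            = ((n:ℝ) + 1 - m) * (v^m).re + (v^m).re := fun m _ => by push_cast; ring
      rw [Finset.sum_congr rfl hcongr, Finset.sum_add_distrib,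
        Finset.sum_Icc_succ_top (by omega : 1 ≤ n+1)]
      have hz : ((n:ℝ) + 1 - (((n+1):ℕ):ℝ)) = 0 := by push_cast; ring
      rw [hz, zero_mul, add_zero]
    push_cast at key ⊢
    rw [key]
    ring



/-- real part of the truncated-Fejér power series -/
noncomputable def psPhi (N : ℕ) (u : ℂ) : ℂ :=
  ∑ m ∈ Finset.Icc 1 N, ((1 - (m:ℝ)/(N+1) : ℝ) : ℂ) * u^m

lemma psPhi_re (N : ℕ) (u : ℂ) :
    (psPhi N u).re = ∑ m ∈ Finset.Icc 1 N, (1 - (m:ℝ)/(N+1)) * (u^m).re := by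
  rw [psPhi, Complex.re_sum]
  refine Finset.sum_congr rfl (fun m _ => ?_)
  rw [Complex.re_ofReal_mul]

lemma psPhi_boundary (N : ℕ) (v : ℂ) (hv : ‖v‖ = 1) :
    -(1/2 : ℝ) ≤ (psPhi N v).re := by
  have h0 := fejer_identity v hv N
  have hns : 0 ≤ Complex.normSq (∑ j ∈ Finset.range (N+1), v^j) := Complex.normSq_nonneg _
  rw [h0] at hns
  have hNpos : (0:ℝ) < (N:ℝ) + 1 := by positivity
  rw [psPhi_re]
  have heq : ∑ m ∈ Finset.Icc 1 N, (1 - (m:ℝ)/(N+1)) * (v^m).re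
      = (∑ m ∈ Finset.Icc 1 N, ((N:ℝ)+1 - m) * (v^m).re) / ((N:ℝ)+1) := by
    rw [Finset.sum_div]
    refine Finset.sum_congr rfl (fun m _ => ?_)
    field_simp
  rw [heq, ge_iff_le.symm, ge_iff_le, le_div_iff₀ hNpos]
  nlinarith [hns]

lemma psPhi_diff (N : ℕ) : Differentiable ℂ (psPhi N) := by
  unfold psPhi
  refine Differentiable.fun_sum (fun m _ => ?_)
  exact (differentiable_const _).mul (differentiable_pow m)

lemma psPhi_interior (N : ℕ) (v : ℂ) (hv : ‖v‖ ≤ 1) :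
    -(1/2 : ℝ) ≤ (psPhi N v).re := by
  have key : ‖Complex.exp (-(psPhi N v))‖ ≤ Real.exp (1/2) := by
    refine Complex.norm_le_of_forall_mem_frontier_norm_le
      (f := fun u => Complex.exp (-(psPhi N u))) (U := Metric.ball (0:ℂ) 1)
      isBounded_ball ?_ ?_ ?_
    · exact ((psPhi_diff N).neg.cexp).diffContOnCl
    · intro w hw
      rw [frontier_ball (0:ℂ) one_ne_zero] at hw
      have hw1 : ‖w‖ = 1 := by
        have := mem_sphere.mp hw
        rwa [Complex.dist_eq, sub_zero] at this
      rw [Complex.norm_exp]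
      have := psPhi_boundary N w hw1
      simp only [Complex.neg_re]
      exact Real.exp_le_exp.mpr (by linarith)
    · rw [closure_ball (0:ℂ) one_ne_zero]
      rw [Metric.mem_closedBall, Complex.dist_eq, sub_zero]
      exact hv
  rw [Complex.norm_exp, Complex.neg_re] at key
  have := Real.exp_le_exp.mp key
  linarith


lemma schwarz_re_bound (F : ℂ → ℂ) (hF : Differentiable ℂ F) (hF0 : F 0 = 0)
    (hhalf : ∀ v : ℂ, ‖v‖ ≤ 1 → -(1/2 : ℝ) ≤ (F v).re) :
    ∀ u : ℂ, ‖u‖ ≤ 1 → -(‖u‖) ≤ (F u).re := by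
  intro u hu
  rcases eq_or_lt_of_le hu with heq | hlt
  · have h := hhalf u hu
    rw [heq]
    linarith
  · set g : ℂ → ℂ := fun v => F v / (1 + F v) with hg
    have hne : ∀ v : ℂ, ‖v‖ ≤ 1 → 1 + F v ≠ 0 := by
      intro v hv h0
      have h1 := hhalf v hv
      have h2 : (1 + F v).re = 1 + (F v).re := by simp
      rw [h0] at h2
      simp at h2
      linarith
    have habs : ∀ v : ℂ, ‖v‖ ≤ 1 → ‖g v‖ ≤ 1 := by
      intro v hv
      have h1 := hhalf v hv
      have hpos : 0 < ‖1 + F v‖ := norm_pos_iff.mpr (hne v hv)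
      have hsq : Complex.normSq (F v) ≤ Complex.normSq (1 + F v) := by
        rw [Complex.normSq_apply, Complex.normSq_apply]
        simp only [Complex.add_re, Complex.add_im, Complex.one_re, Complex.one_im, zero_add]
        nlinarith [h1]
      have habs2 : ‖F v‖ ≤ ‖1 + F v‖ := by
        rw [Complex.norm_def, Complex.norm_def]
        exact Real.sqrt_le_sqrt hsq
      simp only [hg, norm_div]
      rw [div_le_one hpos]
      exact habs2
    have hg0 : g 0 = 0 := by simp [hg, hF0]
    have hgd : DifferentiableOn ℂ g (Metric.ball (0:ℂ) 1) := by
      refine DifferentiableOn.div hF.differentiableOn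
        (((differentiable_const (1:ℂ)).add hF).differentiableOn) ?_
      intro v hv
      refine hne v (le_of_lt ?_)
      have := Metric.mem_ball.mp hv
      rwa [Complex.dist_eq, sub_zero] at this
    have hgu : ‖g u‖ ≤ ‖u‖ := by
      refine le_of_forall_pos_le_add (fun δ hδ => ?_)
      have hmaps : Set.MapsTo g (Metric.ball (0:ℂ) 1) (Metric.ball (g 0) (1+δ)) := by
        intro v hv
        have hv1 : ‖v‖ ≤ 1 := by
          have := Metric.mem_ball.mp hv
          rw [Complex.dist_eq, sub_zero] at this
          exact this.le
        rw [Metric.mem_ball, hg0, Complex.dist_eq, sub_zero]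
        exact lt_of_le_of_lt (habs v hv1) (by linarith)
      have hu' : u ∈ Metric.ball (0:ℂ) 1 := by
        rw [Metric.mem_ball, Complex.dist_eq, sub_zero]; exact hlt
      have h := Complex.dist_le_div_mul_dist_of_mapsTo_ball hgd (hmaps.mono_right Metric.ball_subset_closedBall) hu'
      rw [hg0, Complex.dist_eq, sub_zero, Complex.dist_eq, sub_zero, div_one] at h
      nlinarith [norm_nonneg u, hu, h]
    have hgu1 : ‖g u‖ < 1 := lt_of_le_of_lt hgu hlt
    have h1g : (1 : ℂ) - g u ≠ 0 := by
      intro h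
      have hgu2 : g u = 1 := by linear_combination -h
      rw [hgu2] at hgu1
      simp at hgu1
    have hFu : F u = g u / (1 - g u) := by
      rw [eq_div_iff h1g]
      have hne' := hne u hu
      field_simp [hg]
      rw [hg]; dsimp only; rw [one_sub_div hne', add_sub_cancel_right, mul_one_div]
    set x := (g u).re with hx
    set y := (g u).im with hy
    set s := ‖g u‖ with hs
    have hs2 : s^2 = x^2 + y^2 := by
      rw [hs, Complex.sq_norm, Complex.normSq_apply, ← hx, ← hy]
      ring
    have hxs : |x| ≤ s := Complex.abs_re_le_norm _
    have hs0 : 0 ≤ s := norm_nonneg _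
    have hQ : Complex.normSq (1 - g u) = (1-x)^2 + y^2 := by
      rw [Complex.normSq_apply]
      simp only [Complex.sub_re, Complex.sub_im, Complex.one_re, Complex.one_im]
      ring
    have hQpos : (0:ℝ) < (1-x)^2 + y^2 := by
      rw [← hQ]
      exact Complex.normSq_pos.mpr h1g
    have hre : (F u).re = (x*(1-x) + y*(-y))/((1-x)^2+y^2) := by
      rw [hFu, Complex.div_re, hQ]
      simp only [Complex.sub_re, Complex.sub_im, Complex.one_re, Complex.one_im]
      ring
    rw [hre]
    have hkey : -s ≤ (x*(1-x) + y*(-y))/((1-x)^2+y^2) := by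
      rw [le_div_iff₀ hQpos]
      have hxges : -s ≤ x := neg_le_of_abs_le hxs
      have hxles : x ≤ s := le_of_abs_le hxs
      nlinarith [hgu1, hs0, hs2, hxges, hxles]
    linarith [hgu]


lemma psPhi_eq (N : ℕ) (u : ℂ) :
    psPhi N u = ∑ m ∈ Finset.Icc 1 N, ((1 - (m:ℝ)/(N+1) : ℝ) : ℂ) * u^m := rfl

lemma sum_Icc_id_real (N : ℕ) : ∑ m ∈ Finset.Icc 1 N, (m:ℝ) = N*(N+1)/2 := by
  induction N with
  | zero => simp
  | succ n ih =>
    rw [Finset.sum_Icc_succ_top (by omega), ih]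
    push_cast; ring

lemma sum_Icc_lam (N : ℕ) : ∑ m ∈ Finset.Icc 1 N, (1 - (m:ℝ)/(N+1)) = N/2 := by
  rw [Finset.sum_sub_distrib, Finset.sum_const, Nat.card_Icc, Nat.add_sub_cancel, ← Finset.sum_div,
    sum_Icc_id_real]
  have : (0:ℝ) < (N:ℝ)+1 := by positivity
  field_simp
  ring

/-- Power sum inequality: given `ε > 0` and an absolutely summable sequence `z`
(indexed from 1) of complex numbers with `z 1 ≠ 0` and `|z n| ≤ |z 1|` for all
`n ≥ 1`, setting `M = |z 1|⁻¹ ∑ₙ |z n|`, there exists `1 ≤ m₀ ≤ (12+ε)M` such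
that `Re (∑ₙ (z n)^{m₀}) ≥ ε/(48+5ε) · |z 1|^{m₀}`. -/
theorem power_sum_inequality (ε : ℝ) (hε : 0 < ε) (z : ℕ → ℂ)
    (hz1 : z 1 ≠ 0)
    (hbd : ∀ n : ℕ, 1 ≤ n → ‖z n‖ ≤ ‖z 1‖)
    (hsum : Summable fun n : ℕ => ‖z (n + 1)‖) :
    ∃ m₀ : ℕ, 1 ≤ m₀ ∧
      (m₀ : ℝ) ≤ (12 + ε) * ((∑' n : ℕ, ‖z (n + 1)‖) / ‖z 1‖) ∧
      (∑' n : ℕ, (z (n + 1)) ^ m₀).re ≥ ε / (48 + 5 * ε) * ‖z 1‖ ^ m₀ := by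
  by_contra hcon
  push_neg at hcon
  set r := ‖z 1‖ with hr_def
  have hr : 0 < r := norm_pos_iff.mpr hz1
  set c := ε / (48 + 5*ε) with hc_def
  have hden : (0:ℝ) < 48 + 5*ε := by linarith
  have hc0 : 0 < c := div_pos hε hden
  have hc5 : c < 1/4 := by
    rw [hc_def, div_lt_iff₀ hden]; linarith
  set W : ℕ → ℂ := fun k => z (k+1) / (r:ℂ) with hW_def
  have hWabs : ∀ k, ‖W k‖ = ‖z (k+1)‖ / r := by
    intro k
    simp only [hW_def, norm_div, Complex.norm_real, Real.norm_eq_abs, abs_of_pos hr]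
  have hW0 : ‖W 0‖ = 1 := by
    rw [hWabs]
    field_simp
    rfl
  have hWle : ∀ k, ‖W k‖ ≤ 1 := by
    intro k; rw [hWabs, div_le_one hr]; exact hbd (k+1) (by omega)
  have hρsum : Summable (fun k => ‖W k‖) := by
    refine (hsum.div_const r).congr (fun k => (hWabs k).symm)
  set M := ∑' k, ‖W k‖ with hM_def
  have hMeq : M = (∑' n, ‖z (n+1)‖) / r := by
    rw [hM_def, ← tsum_div_const]
    exact tsum_congr (fun k => hWabs k)
  have hM1 : 1 ≤ M := by
    have h := hρsum.le_tsum 0 (fun j _ => norm_nonneg _)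
    rw [hW0] at h; exact h
  set N := ⌊(12+ε) * M⌋₊ with hN_def
  have hsumpow : ∀ m, 1 ≤ m → Summable (fun k => (W k)^m) := by
    intro m hm
    refine Summable.of_norm_bounded hρsum (fun k => ?_)
    rw [norm_pow]
    exact pow_le_of_le_one (norm_nonneg _) (hWle k) (by omega)
  have hsumre : ∀ m, 1 ≤ m → Summable (fun k => ((W k)^m).re) := by
    intro m hm
    refine Summable.of_norm_bounded hρsum (fun k => ?_)
    rw [Real.norm_eq_abs]
    refine le_trans (Complex.abs_re_le_norm _) ?_
    rw [norm_pow]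
    exact pow_le_of_le_one (norm_nonneg _) (hWle k) (by omega)
  set t : ℕ → ℝ := fun m => ∑' k, ((W k)^m).re with ht_def
  have htlt : ∀ m, 1 ≤ m → m ≤ N → t m < c := by
    intro m hm hmN
    have hmR : (m:ℝ) ≤ (12+ε) * ((∑' n, ‖z (n+1)‖) / r) := by
      rw [← hMeq]
      calc (m:ℝ) ≤ (N:ℝ) := by exact_mod_cast hmN
        _ ≤ (12+ε)*M := Nat.floor_le (by positivity)
    have h := hcon m hm hmR
    have hzW : ∀ k, z (k+1) = (r:ℂ) * W k := by
      intro k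
      simp only [hW_def]
      rw [← mul_div_assoc]
      exact (mul_div_cancel_left₀ _ (Complex.ofReal_ne_zero.mpr hr.ne')).symm
    have hts : (∑' n, (z (n+1))^m) = (r:ℂ)^m * ∑' k, (W k)^m := by
      rw [← tsum_mul_left]
      exact tsum_congr fun k => by rw [hzW k, mul_pow]
    rw [hts] at h
    have hre2 : ((r:ℂ)^m * ∑' k, (W k)^m).re = r^m * t m := by
      rw [← Complex.ofReal_pow, Complex.re_ofReal_mul]
      congr 1
      exact Complex.re_tsum (hsumpow m hm)
    rw [hre2] at h
    have hrm : 0 < r^m := pow_pos hr m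
    have h2 : r^m * t m < r^m * c := by linarith [h]
    exact (mul_lt_mul_iff_right₀ hrm).mp h2
  -- the coefficient sequences
  set lam : ℕ → ℝ := fun m => 1 - (m:ℝ)/(N+1) with hlam_def
  set γ : ℕ → ℝ := fun m => ((W 0)^m).re with hγ_def
  set a : ℕ → ℝ := fun m => lam m * γ m with ha_def
  have hγle : ∀ m, |γ m| ≤ 1 := by
    intro m
    refine le_trans (Complex.abs_re_le_norm _) ?_
    rw [norm_pow, hW0, one_pow]
  have hlam0 : ∀ m ∈ Finset.Icc 1 N, 0 ≤ lam m := by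
    intro m hm
    obtain ⟨_, hm2⟩ := Finset.mem_Icc.mp hm
    have : (m:ℝ) ≤ (N:ℝ) + 1 := by exact_mod_cast Nat.le_succ_of_le hm2
    rw [hlam_def]
    have hpos : (0:ℝ) < (N:ℝ)+1 := by positivity
    rw [sub_nonneg, div_le_one hpos]
    exact this
  -- the polynomial fF
  set fF : ℂ → ℂ := fun u => ∑ m ∈ Finset.Icc 1 N, ((a m : ℝ) : ℂ) * u^m with hfF_def
  have hfid : ∀ u : ℂ, fF u
      = (psPhi N (u * W 0) + psPhi N (u * (starRingEnd ℂ) (W 0))) / 2 := by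
    intro u
    rw [psPhi_eq, psPhi_eq, hfF_def]
    simp only
    rw [← Finset.sum_add_distrib, Finset.sum_div]
    refine Finset.sum_congr rfl fun m hm => ?_
    have hconj := Complex.add_conj ((W 0)^m)
    have : ((a m : ℝ) : ℂ) = ((lam m : ℝ):ℂ) * ((γ m : ℝ):ℂ) := by
      rw [ha_def]; push_cast; ring
    rw [this, mul_pow, mul_pow, ← map_pow]
    rw [eq_div_iff (two_ne_zero)]
    have hγc : ((γ m : ℝ):ℂ) = (((W 0)^m).re : ℝ) := by rw [hγ_def]
    calc ((lam m:ℝ):ℂ) * ((γ m:ℝ):ℂ) * u^m * 2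
        = ((lam m:ℝ):ℂ) * u^m * (2 * (((W 0)^m).re : ℝ)) := by rw [hγc]; ring
      _ = ((lam m:ℝ):ℂ) * u^m * ((W 0)^m + (starRingEnd ℂ) ((W 0)^m)) := by
          rw [hconj]; push_cast; ring
      _ = ((lam m:ℝ):ℂ) * (u^m * (W 0)^m) + ((lam m:ℝ):ℂ) * (u^m * (starRingEnd ℂ) ((W 0)^m)) := by ring
  have hf_half : ∀ v : ℂ, ‖v‖ ≤ 1 → -(1/2 : ℝ) ≤ (fF v).re := by
    intro v hv
    rw [hfid v]
    have h1 := psPhi_interior N (v * W 0) (by rw [norm_mul, hW0, mul_one]; exact hv)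
    have h2 := psPhi_interior N (v * (starRingEnd ℂ) (W 0))
      (by rw [norm_mul, Complex.norm_conj, hW0, mul_one]; exact hv)
    have hre : ((psPhi N (v * W 0) + psPhi N (v * (starRingEnd ℂ) (W 0))) / 2).re
        = ((psPhi N (v * W 0)).re + (psPhi N (v * (starRingEnd ℂ) (W 0))).re)/2 := by
      simp [Complex.div_re, Complex.normSq]
    rw [hre]
    linarith
  have hf0 : fF 0 = 0 := by
    rw [hfF_def]
    refine Finset.sum_eq_zero fun m hm => ?_
    have hm1 : m ≠ 0 := by
      have := (Finset.mem_Icc.mp hm).1; omega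
    rw [zero_pow hm1, mul_zero]
  have hfdiff : Differentiable ℂ fF := by
    rw [hfF_def]
    exact Differentiable.fun_sum fun m _ => (differentiable_const _).mul (differentiable_pow m)
  have hPhi0 : psPhi N 0 = 0 := by
    rw [psPhi_eq]
    refine Finset.sum_eq_zero fun m hm => ?_
    have hm1 : m ≠ 0 := by
      have := (Finset.mem_Icc.mp hm).1; omega
    rw [zero_pow hm1, mul_zero]
  have hPhidiff : Differentiable ℂ (psPhi N) := by
    have : psPhi N = fun u => ∑ m ∈ Finset.Icc 1 N, ((1 - (m:ℝ)/(N+1) : ℝ) : ℂ) * u^m :=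
      funext (psPhi_eq N)
    rw [this]
    exact Differentiable.fun_sum fun m _ => (differentiable_const _).mul (differentiable_pow m)
  have hPhiLB := schwarz_re_bound (psPhi N) hPhidiff hPhi0 (psPhi_interior N)
  have hfLB := schwarz_re_bound fF hfdiff hf0 hf_half
  -- exchange of sums
  have hexch : ∀ b : ℕ → ℝ,
      (∑' k, (∑ m ∈ Finset.Icc 1 N, ((b m :ℝ):ℂ) * (W k)^m).re)
        = ∑ m ∈ Finset.Icc 1 N, b m * t m := by
    intro b
    have h1 : ∀ k : ℕ, (∑ m ∈ Finset.Icc 1 N, ((b m:ℝ):ℂ) * (W k)^m).re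
        = ∑ m ∈ Finset.Icc 1 N, b m * ((W k)^m).re := by
      intro k
      rw [Complex.re_sum]
      exact Finset.sum_congr rfl fun m _ => Complex.re_ofReal_mul _ _
    calc (∑' k, (∑ m ∈ Finset.Icc 1 N, ((b m :ℝ):ℂ) * (W k)^m).re)
        = ∑' k, ∑ m ∈ Finset.Icc 1 N, b m * ((W k)^m).re := tsum_congr h1
      _ = ∑ m ∈ Finset.Icc 1 N, ∑' k, b m * ((W k)^m).re :=
          Summable.tsum_finsetSum (fun m hm => ((hsumre m (Finset.mem_Icc.mp hm).1).mul_left (b m)))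
      _ = ∑ m ∈ Finset.Icc 1 N, b m * t m :=
          Finset.sum_congr rfl fun m hm => by rw [tsum_mul_left]
  have hsumFb : ∀ b : ℕ → ℝ,
      Summable (fun k => (∑ m ∈ Finset.Icc 1 N, ((b m:ℝ):ℂ) * (W k)^m).re) := by
    intro b
    have h := summable_sum (s := Finset.Icc 1 N)
      (f := fun m (k:ℕ) => b m * ((W k)^m).re)
      (fun m hm => ((hsumre m (Finset.mem_Icc.mp hm).1).mul_left (b m)))
    refine h.congr fun k => ?_
    rw [Complex.re_sum]
    exact (Finset.sum_congr rfl fun m _ => (Complex.re_ofReal_mul _ _).symm)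
  -- lower bound on Z
  have hZlb : -M ≤ ∑ m ∈ Finset.Icc 1 N, lam m * t m := by
    rw [← hexch lam]
    have hperk : ∀ k : ℕ, -(‖W k‖)
        ≤ (∑ m ∈ Finset.Icc 1 N, ((lam m:ℝ):ℂ) * (W k)^m).re := by
      intro k
      have h := hPhiLB (W k) (hWle k)
      rwa [psPhi_eq] at h
    calc -M = ∑' k, -(‖W k‖) := by rw [tsum_neg]
      _ ≤ _ := Summable.tsum_le_tsum hperk hρsum.neg (hsumFb lam)
  -- lower bound on X
  have hfWk : ∀ k : ℕ, fF (W k) = ∑ m ∈ Finset.Icc 1 N, ((a m:ℝ):ℂ) * (W k)^m := fun k => rfl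
  have hXeq : (∑' k, (fF (W k)).re) = ∑ m ∈ Finset.Icc 1 N, a m * t m := hexch a
  have hsumfF : Summable (fun k => (fF (W k)).re) := hsumFb a
  have hγsq : ∀ m : ℕ, (((W 0)^2)^m).re = 2 * (γ m)^2 - 1 := by
    intro m
    have h1 : ‖(W 0)^m‖ = 1 := by rw [norm_pow, hW0, one_pow]
    have h2 : (((W 0)^m).re)^2 + (((W 0)^m).im)^2 = 1 := by
      have h3 := Complex.sq_norm ((W 0)^m)
      rw [h1, Complex.normSq_apply] at h3
      nlinarith [h3]
    have h3 : ((W 0)^2)^m = ((W 0)^m)^2 := by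
      rw [← pow_mul, ← pow_mul, mul_comm]
    rw [h3, sq, Complex.mul_re, hγ_def]
    simp only
    nlinarith [h2]
  have hhead : (N:ℝ)/4 - 1/4 ≤ (fF (W 0)).re := by
    have h1 : (fF (W 0)).re = ∑ m ∈ Finset.Icc 1 N, a m * γ m := by
      rw [hfWk, Complex.re_sum]
      exact Finset.sum_congr rfl fun m _ => by
        rw [Complex.re_ofReal_mul, hγ_def]
    have h2 : ∀ m ∈ Finset.Icc 1 N, a m * γ m
        = lam m * (1 + (((W 0)^2)^m).re)/2 := by
      intro m hm
      rw [ha_def]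
      simp only
      rw [hγsq m]
      ring
    rw [h1, Finset.sum_congr rfl h2]
    have h3 : ∑ m ∈ Finset.Icc 1 N, lam m * (1 + (((W 0)^2)^m).re)/2
        = (∑ m ∈ Finset.Icc 1 N, lam m)/2
          + (∑ m ∈ Finset.Icc 1 N, lam m * (((W 0)^2)^m).re)/2 := by
      rw [← add_div, ← Finset.sum_add_distrib, ← Finset.sum_div]
      congr 1
      exact Finset.sum_congr rfl fun m _ => by ring
    rw [h3]
    have h4 : ∑ m ∈ Finset.Icc 1 N, lam m = (N:ℝ)/2 := sum_Icc_lam N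
    have h5 : -(1/2:ℝ) ≤ ∑ m ∈ Finset.Icc 1 N, lam m * (((W 0)^2)^m).re := by
      have h6 := psPhi_interior N ((W 0)^2) (by rw [norm_pow, hW0, one_pow])
      rw [psPhi_re] at h6
      exact h6
    rw [h4]
    linarith
  have htailρ : ∑' k, ‖W (k+1)‖ = M - 1 := by
    have h := Summable.tsum_eq_zero_add hρsum
    rw [hW0] at h
    rw [hM_def]
    linarith [h]
  have htail : -(M - 1) ≤ ∑' k, (fF (W (k+1))).re := by
    have hsumtail : Summable fun k => (fF (W (k+1))).re :=
      (summable_nat_add_iff (f := fun k => (fF (W k)).re) 1).mpr hsumfF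
    have hsumρtail : Summable fun k => ‖W (k+1)‖ :=
      (summable_nat_add_iff (f := fun k => ‖W k‖) 1).mpr hρsum
    calc -(M-1) = ∑' k, -(‖W (k+1)‖) := by rw [tsum_neg, htailρ]
      _ ≤ _ := Summable.tsum_le_tsum (fun k => hfLB (W (k+1)) (hWle _)) hsumρtail.neg hsumtail
  have hXlb : (N:ℝ)/4 - 1/4 - (M - 1) ≤ ∑ m ∈ Finset.Icc 1 N, a m * t m := by
    rw [← hXeq, Summable.tsum_eq_zero_add hsumfF]
    linarith [hhead, htail]
  -- upper bound on X
  have hXub : ∑ m ∈ Finset.Icc 1 N, a m * t m ≤ c * N + M := by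
    have hstep : ∀ m ∈ Finset.Icc 1 N, a m * t m ≤ lam m * (2*c - t m) := by
      intro m hm
      obtain ⟨hm1, hm2⟩ := Finset.mem_Icc.mp hm
      have hl0 := hlam0 m hm
      have hγm := abs_le.mp (hγle m)
      have htm := htlt m hm1 hm2
      have h1 : (1 + γ m) * t m ≤ (1 + γ m) * c :=
        mul_le_mul_of_nonneg_left htm.le (by linarith [hγm.1])
      have h2 : a m * t m = lam m * ((1 + γ m) * t m - t m) := by
        rw [ha_def]; ring
      rw [h2]
      have h3 : (1 + γ m) * t m - t m ≤ 2*c - t m := by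
        have : (1 + γ m) * c ≤ 2 * c := by nlinarith [hγm.2, hc0]
        linarith
      exact mul_le_mul_of_nonneg_left h3 hl0
    have h4 : ∑ m ∈ Finset.Icc 1 N, a m * t m
        ≤ ∑ m ∈ Finset.Icc 1 N, lam m * (2*c - t m) := Finset.sum_le_sum hstep
    have h5 : ∑ m ∈ Finset.Icc 1 N, lam m * (2*c - t m)
        = 2*c*(∑ m ∈ Finset.Icc 1 N, lam m) - ∑ m ∈ Finset.Icc 1 N, lam m * t m := by
      rw [Finset.mul_sum, ← Finset.sum_sub_distrib]
      exact Finset.sum_congr rfl fun m _ => by ring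
    have h6 : ∑ m ∈ Finset.Icc 1 N, lam m = (N:ℝ)/2 := sum_Icc_lam N
    rw [h5, h6] at h4
    calc ∑ m ∈ Finset.Icc 1 N, a m * t m ≤ 2*c*((N:ℝ)/2) - ∑ m ∈ Finset.Icc 1 N, lam m * t m := h4
      _ ≤ c * N + M := by linarith [hZlb]
  -- final contradiction
  have hNfl : (12+ε)*M - 1 < (N:ℝ) := Nat.sub_one_lt_floor _
  have hmain : (N:ℝ)/4 - 1/4 - (M - 1) ≤ c * N + M := le_trans hXlb hXub
  have hcN : c * (48+5*ε) = ε := by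
    rw [hc_def]
    field_simp
  nlinarith [hmain, hNfl, hM1, hε, mul_lt_mul_of_pos_left hNfl hε, hcN,
    mul_le_mul_of_nonneg_right hmain hden.le, sq_nonneg ε,
    mul_nonneg hε.le (sub_nonneg.mpr hM1)]
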